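/- Let S ⊆ {1, …, n} with |S| ≥ 2. Then F(S) ≠ ∅ if and only if there exists i ∈ S with F(S∖{i}) ≠ ∅ and v_i((C(S∖{i}), 1)) ≥ B; and in that case C(S) = min over all such i of the least point b ∈ [C(S∖{i}), 1] with v_i((C(S∖{i}), b)) ≥ B. For singletons, F({i}) ≠ ∅ if and only if v_i((0,1)) ≥ B, and in that case C({i}) is the least b ∈ [0,1] with v_i((0,b)) ≥ B. (Correctness of the recurrence used in the FPT-FPTAS for egalitarian welfare, Theorem 5.) -/

import Mathlib

open MeasureTheory Set

/-- `Feas n v B S` is the set `F(S)`: points `a ∈ [0,1]` such that `[0,a]` can be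
partitioned into `S.card` consecutive intervals assigned bijectively to the
players of `S`, each player valuing her own interval at least `B`. -/
def Feas (n : ℕ) (v : Fin n → Measure ℝ) (B : ℝ) (S : Finset (Fin n)) : Set ℝ :=
  {a | a ∈ Icc (0 : ℝ) 1 ∧
    ∃ (c : Fin (S.card + 1) → ℝ) (σ : Fin S.card ≃ {i // i ∈ S}),
      Monotone c ∧ c 0 = 0 ∧ c (Fin.last S.card) = a ∧
      ∀ b : Fin S.card,
        ENNReal.ofReal B ≤ v (σ b) (Ioo (c b.castSucc) (c b.succ))}

/-- Least element of the threshold set `{b ∈ [a,1] | μ((a,b)) ≥ B}`. -/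
theorem leastT (μ : Measure ℝ) [NullSingletonClass μ] (hfin : μ univ ≠ ⊤) (B : ℝ) (a : ℝ)
    (hne : {b | b ∈ Icc a 1 ∧ ENNReal.ofReal B ≤ μ (Ioo a b)}.Nonempty) :
    IsLeast {b | b ∈ Icc a 1 ∧ ENNReal.ofReal B ≤ μ (Ioo a b)}
      (sInf {b | b ∈ Icc a 1 ∧ ENNReal.ofReal B ≤ μ (Ioo a b)}) := by
  set T := {b | b ∈ Icc a 1 ∧ ENNReal.ofReal B ≤ μ (Ioo a b)} with hT
  have hbdd : BddBelow T := ⟨a, fun x hx => hx.1.1⟩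
  set m := sInf T with hm
  obtain ⟨b0, hb0⟩ := hne
  have hm1 : m ≤ 1 := (csInf_le hbdd hb0).trans hb0.1.2
  have ham : a ≤ m := le_csInf ⟨b0, hb0⟩ fun x hx => hx.1.1
  have h1 : ∀ k : ℕ, ENNReal.ofReal B ≤ μ (Ioo a (m + 1/(k+1))) := by
    intro k
    have hpos : (0:ℝ) < 1/(k+1) := by positivity
    obtain ⟨b', hb', hlt⟩ := exists_lt_of_csInf_lt ⟨b0, hb0⟩ (lt_add_of_pos_right m hpos)
    exact hb'.2.trans (measure_mono (Ioo_subset_Ioo le_rfl hlt.le))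
  have h2 : (⋂ k : ℕ, Ioo a (m + 1/(k+1))) = Ioc a m := by
    ext x
    simp only [mem_iInter, mem_Ioo, mem_Ioc]
    constructor
    · rintro h
      refine ⟨(h 0).1, ?_⟩
      by_contra hx
      push_neg at hx
      obtain ⟨k, hk⟩ := exists_nat_one_div_lt (sub_pos.mpr hx)
      exact absurd ((h k).2) (by linarith)
    · rintro ⟨h1', h2'⟩ k
      exact ⟨h1', h2'.trans_lt (lt_add_of_pos_right m (by positivity))⟩
  have hkey : ENNReal.ofReal B ≤ μ (Ioo a m) := by
    have hmeas : μ (⋂ k : ℕ, Ioo a (m + 1/(k+1))) = ⨅ k : ℕ, μ (Ioo a (m + 1/(k+1))) := by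
      refine Directed.measure_iInter (fun k => measurableSet_Ioo.nullMeasurableSet) ?_ ⟨0, ?_⟩
      · have hanti : Antitone (fun k : ℕ => Ioo a (m + 1/(k+1))) := by
          intro j k hjk
          apply Ioo_subset_Ioo le_rfl
          have : (1:ℝ)/(k+1) ≤ 1/(j+1) := by
            apply one_div_le_one_div_of_le (by positivity) (by exact_mod_cast by omega)
          linarith
        exact hanti.directed_ge
      · exact ne_top_of_le_ne_top hfin (measure_mono (subset_univ _))
    have hIoc : ENNReal.ofReal B ≤ μ (Ioc a m) := by
      rw [← h2, hmeas]
      exact le_iInf h1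
    refine hIoc.trans ?_
    calc μ (Ioc a m) ≤ μ (Ioo a m ∪ {m}) := measure_mono (fun x hx => by
          rcases eq_or_lt_of_le hx.2 with h | h
          · exact Or.inr (by simp [h])
          · exact Or.inl ⟨hx.1, h⟩)
      _ ≤ μ (Ioo a m) + μ {m} := measure_union_le _ _
      _ = μ (Ioo a m) := by rw [measure_singleton, add_zero]
  exact ⟨⟨⟨ham, hm1⟩, hkey⟩, fun x hx => csInf_le hbdd hx⟩

variable {n : ℕ} (v : Fin n → Measure ℝ) (B : ℝ)

/-- Auxiliary list-based feasibility predicate: `Ok a l b` means the interval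
`[a,b]` can be divided into consecutive intervals for the players listed in `l`
(in order), each worth at least `B` to its owner. -/
def Ok : ℝ → List (Fin n) → ℝ → Prop
  | a, [], b => a = b
  | a, i :: l, b => ∃ x, a ≤ x ∧ ENNReal.ofReal B ≤ v i (Ioo a x) ∧ Ok x l b

theorem ok_le : ∀ {a : ℝ} {l : List (Fin n)} {b : ℝ}, Ok v B a l b → a ≤ b
  | _, [], _, h => le_of_eq h
  | _, _ :: _, _, ⟨_, hax, _, h⟩ => hax.trans (ok_le h)

theorem ok_concat : ∀ {a : ℝ} (l : List (Fin n)) {i : Fin n} {b : ℝ},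
    Ok v B a (l ++ [i]) b ↔ ∃ x, Ok v B a l x ∧ x ≤ b ∧ ENNReal.ofReal B ≤ v i (Ioo x b)
  | a, [], i, b => by
    simp only [List.nil_append, Ok]
    constructor
    · rintro ⟨x, hax, hB, rfl⟩; exact ⟨a, rfl, hax, hB⟩
    · rintro ⟨x, rfl, hxb, hB⟩; exact ⟨b, hxb, hB, rfl⟩
  | a, j :: l, i, b => by
    simp only [List.cons_append, Ok]
    constructor
    · rintro ⟨x, hax, hB, h⟩
      obtain ⟨y, h1, h2, h3⟩ := (ok_concat l).1 h
      exact ⟨y, ⟨x, hax, hB, h1⟩, h2, h3⟩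
    · rintro ⟨y, ⟨x, hax, hB, h1⟩, h2, h3⟩
      exact ⟨x, hax, hB, (ok_concat l).2 ⟨y, h1, h2, h3⟩⟩

theorem ok_ofFn : ∀ (m : ℕ) (c : Fin (m+1) → ℝ) (f : Fin m → Fin n), Monotone c →
    (∀ j : Fin m, ENNReal.ofReal B ≤ v (f j) (Ioo (c j.castSucc) (c j.succ))) →
    Ok v B (c 0) (List.ofFn f) (c (Fin.last m))
  | 0, c, f, _, _ => rfl
  | m+1, c, f, hmono, hcond => by
    rw [List.ofFn_succ]
    refine ⟨c 1, hmono (Fin.zero_le 1), ?_, ?_⟩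
    · have := hcond 0
      simpa using this
    · have := ok_ofFn m (fun j => c j.succ) (fun j => f j.succ)
        (fun a b hab => hmono (Fin.succ_le_succ_iff.mpr hab)) (fun j => by
          have := hcond j.succ
          simpa [← Fin.succ_castSucc] using this)
      simpa [Fin.succ_last] using this

theorem ok_toCuts : ∀ (l : List (Fin n)) (a b : ℝ), Ok v B a l b →
    ∃ c : Fin (l.length + 1) → ℝ, Monotone c ∧ c 0 = a ∧ c (Fin.last l.length) = b ∧
      ∀ j : Fin l.length, ENNReal.ofReal B ≤ v (l.get j) (Ioo (c j.castSucc) (c j.succ))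
  | [], a, b, h => ⟨fun _ => a, monotone_const, rfl, h, fun j => j.elim0⟩
  | i :: l, a, b, ⟨x, hax, hB, h⟩ => by
    obtain ⟨c', hm, h0, hl, hc⟩ := ok_toCuts l x b h
    refine ⟨Fin.cons a c', ?_, rfl, ?_, ?_⟩
    · rw [Fin.monotone_iff_le_succ]
      intro j
      induction j using Fin.cases with
      | zero =>
        rw [Fin.cons_succ, Fin.castSucc_zero, Fin.cons_zero, h0]
        exact hax
      | succ p =>
        rw [← Fin.succ_castSucc, Fin.cons_succ, Fin.cons_succ]
        exact hm (p.castSucc_le_succ)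
    · rw [show Fin.last (i :: l).length = (Fin.last l.length).succ from rfl, Fin.cons_succ]
      exact hl
    · intro j
      induction j using Fin.cases with
      | zero =>
        rw [Fin.cons_succ, Fin.castSucc_zero, Fin.cons_zero, h0]
        exact hB
      | succ p =>
        rw [← Fin.succ_castSucc, Fin.cons_succ, Fin.cons_succ]
        exact hc p

theorem feas_iff (S : Finset (Fin n)) (b : ℝ) :
    b ∈ Feas n v B S ↔
      b ∈ Icc (0:ℝ) 1 ∧ ∃ l : List (Fin n), l.Nodup ∧ l.toFinset = S ∧ Ok v B 0 l b := by
  constructor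
  · rintro ⟨hb, c, σ, hm, h0, hl, hcond⟩
    refine ⟨hb, List.ofFn (fun j => (σ j : Fin n)), ?_, ?_, ?_⟩
    · exact List.nodup_ofFn.mpr fun p q hpq => σ.injective (Subtype.ext hpq)
    · apply Finset.eq_of_subset_of_card_le
      · intro x hx
        rw [List.mem_toFinset, List.mem_ofFn] at hx
        obtain ⟨j, rfl⟩ := hx
        exact (σ j).2
      · rw [List.toFinset_card_of_nodup (List.nodup_ofFn.mpr
          fun p q hpq => σ.injective (Subtype.ext hpq)), List.length_ofFn]
    · have := ok_ofFn v B S.card c (fun j => (σ j : Fin n)) hm hcond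
      rwa [h0, hl] at this
  · rintro ⟨hb, l, hnd, htf, hok⟩
    have hlen : l.length = S.card := by
      rw [← List.toFinset_card_of_nodup hnd, htf]
    obtain ⟨c, hm, h0, hl, hc⟩ := ok_toCuts v B l 0 b hok
    have hgetmem : ∀ j : Fin l.length, l.get j ∈ S := fun j => by
      rw [← htf, List.mem_toFinset]; exact l.get_mem j
    have hinj : Function.Injective (fun j : Fin l.length =>
        (⟨l.get j, hgetmem j⟩ : {i // i ∈ S})) := fun p q hpq => by
      exact List.nodup_iff_injective_get.mp hnd (congrArg Subtype.val hpq)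
    have hbij : Function.Bijective (fun j : Fin l.length =>
        (⟨l.get j, hgetmem j⟩ : {i // i ∈ S})) := by
      rw [Fintype.bijective_iff_injective_and_card]
      exact ⟨hinj, by simp [hlen]⟩
    refine ⟨hb, fun j => c (Fin.cast (by rw [hlen]) j),
      (finCongr hlen.symm).trans (Equiv.ofBijective _ hbij), ?_, ?_, ?_, ?_⟩
    · exact hm.comp fun p q hpq => hpq
    · exact h0
    · convert hl using 2
      exact Fin.ext (by simp [hlen])
    · intro j
      have := hc (Fin.cast hlen.symm j)
      convert this using 2 <;> rfl

theorem feas_empty : Feas n v B ∅ = {0} := by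
  ext b
  rw [feas_iff]
  constructor
  · rintro ⟨_, l, _, htf, hok⟩
    rw [List.toFinset_eq_empty_iff] at htf
    subst htf
    exact (hok).symm
  · rintro rfl
    exact ⟨⟨le_rfl, zero_le_one⟩, [], List.nodup_nil, rfl, rfl⟩

theorem feas_char (S : Finset (Fin n)) (h1 : S.Nonempty)
    (hIH : ∀ i ∈ S, (Feas n v B (S.erase i)).Nonempty →
      sInf (Feas n v B (S.erase i)) ∈ Feas n v B (S.erase i)) :
    Feas n v B S = {b | ∃ i ∈ S, (Feas n v B (S.erase i)).Nonempty ∧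
      b ∈ Icc (sInf (Feas n v B (S.erase i))) 1 ∧
      ENNReal.ofReal B ≤ v i (Ioo (sInf (Feas n v B (S.erase i))) b)} := by
  ext b
  rw [feas_iff]
  constructor
  · rintro ⟨hbI, l, hnd, htf, hok⟩
    rcases l.eq_nil_or_concat with rfl | ⟨L, i, rfl⟩
    · rw [List.toFinset_nil] at htf
      exact absurd htf.symm (Finset.nonempty_iff_ne_empty.mp h1)
    rw [List.concat_eq_append] at hok hnd htf
    obtain ⟨x, hokL, hxb, hB⟩ := (ok_concat v B L).1 hok
    have hiS : i ∈ S := by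
      rw [← htf, List.mem_toFinset]
      simp
    have hinotL : i ∉ L := by
      have := List.disjoint_of_nodup_append hnd
      intro h
      exact this h (by simp)
    have hLtf : L.toFinset = S.erase i := by
      rw [← htf]
      ext y
      simp only [List.toFinset_append, List.toFinset_cons, List.toFinset_nil,
        LawfulSingleton.insert_empty_eq, Finset.mem_erase, Finset.mem_union, Finset.mem_singleton,
        List.mem_toFinset]
      constructor
      · intro hy
        exact ⟨fun h => hinotL (h ▸ hy), Or.inl hy⟩
      · rintro ⟨hne, hy | rfl⟩
        · exact hy
        · exact absurd rfl hne
    have hxF : x ∈ Feas n v B (S.erase i) := by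
      rw [feas_iff]
      exact ⟨⟨ok_le v B hokL, hxb.trans hbI.2⟩, L,
        (List.nodup_append.mp hnd).1, hLtf, hokL⟩
    have hbdd : BddBelow (Feas n v B (S.erase i)) :=
      ⟨0, fun y hy => ((feas_iff v B _ y).1 hy).1.1⟩
    have hinf_le : sInf (Feas n v B (S.erase i)) ≤ x := csInf_le hbdd hxF
    refine ⟨i, hiS, ⟨x, hxF⟩, ⟨hinf_le.trans hxb, hbI.2⟩, ?_⟩
    exact hB.trans (measure_mono (Ioo_subset_Ioo hinf_le le_rfl))
  · rintro ⟨i, hiS, hne, ⟨hCb, hb1⟩, hB⟩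
    have hC := hIH i hiS hne
    rw [feas_iff] at hC
    obtain ⟨hCI, L, hnd, htf, hokL⟩ := hC
    have hinotL : i ∉ L := fun h => by
      have : i ∈ S.erase i := htf ▸ List.mem_toFinset.mpr h
      simp at this
    refine ⟨⟨hCI.1.trans hCb, hb1⟩, L ++ [i], ?_, ?_, ?_⟩
    · rw [List.nodup_append]
      exact ⟨hnd, List.nodup_singleton i, by simp only [List.mem_singleton]; rintro a ha b rfl rfl; exact hinotL ha⟩
    · rw [List.toFinset_append, htf]
      simp only [List.toFinset_cons, List.toFinset_nil, LawfulSingleton.insert_empty_eq]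
      ext y
      simp only [Finset.mem_union, Finset.mem_erase, Finset.mem_singleton]
      constructor
      · rintro (⟨_, h⟩ | rfl)
        · exact h
        · exact hiS
      · intro hy
        rcases eq_or_ne y i with rfl | hne'
        · exact Or.inr rfl
        · exact Or.inl ⟨hne', hy⟩
    · exact (ok_concat v B L).2 ⟨_, hokL, hCb, hB⟩

theorem feas_least (hat : ∀ i, NoAtoms (v i)) (hfin : ∀ i, v i univ ≠ ⊤) :
    ∀ S : Finset (Fin n), (Feas n v B S).Nonempty →
      IsLeast (Feas n v B S) (sInf (Feas n v B S)) := by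
  intro S
  induction S using Finset.strongInductionOn with
  | _ S IH =>
    intro hne
    rcases S.eq_empty_or_nonempty with rfl | hS
    · rw [feas_empty, csInf_singleton]
      exact ⟨rfl, fun x hx => hx.ge⟩
    · classical
      have hchar := feas_char v B S hS
        (fun i hi hnei => (IH (S.erase i) (Finset.erase_ssubset hi) hnei).1)
      set C : Fin n → ℝ := fun i => sInf (Feas n v B (S.erase i)) with hC
      set T : Fin n → Set ℝ :=
        fun i => {b | b ∈ Icc (C i) 1 ∧ ENNReal.ofReal B ≤ v i (Ioo (C i) b)} with hTdef
      have hchar' : Feas n v B S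
          = {b | ∃ i ∈ S, (Feas n v B (S.erase i)).Nonempty ∧ b ∈ T i} := hchar
      set J := S.filter (fun i => (Feas n v B (S.erase i)).Nonempty ∧ (T i).Nonempty) with hJ
      have hJne : J.Nonempty := by
        obtain ⟨b0, hb0⟩ := hne
        rw [hchar'] at hb0
        obtain ⟨i, hi, hnei, hTi⟩ := hb0
        exact ⟨i, Finset.mem_filter.2 ⟨hi, hnei, ⟨b0, hTi⟩⟩⟩
      obtain ⟨i0, hi0J, hmin⟩ := J.exists_min_image (fun i => sInf (T i)) hJne
      have key : ∀ i ∈ J, IsLeast (T i) (sInf (T i)) := fun i hiJ => by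
        haveI : NullSingletonClass (v i) := hat i
        exact leastT (v i) (hfin i) B (C i) (Finset.mem_filter.1 hiJ).2.2
      have hsub : ∀ i ∈ J, T i ⊆ Feas n v B S := fun i hiJ x hx => by
        rw [hchar']
        exact ⟨i, (Finset.mem_filter.1 hiJ).1, (Finset.mem_filter.1 hiJ).2.1, hx⟩
      have hlst : IsLeast (Feas n v B S) (sInf (T i0)) := by
        refine ⟨hsub i0 hi0J (key i0 hi0J).1, fun x hx => ?_⟩
        rw [hchar'] at hx
        obtain ⟨i, hi, hnei, hTi⟩ := hx
        have hiJ : i ∈ J := Finset.mem_filter.2 ⟨hi, hnei, ⟨x, hTi⟩⟩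
        exact (hmin i hiJ).trans ((key i hiJ).2 hTi)
      rwa [hlst.csInf_eq]

/-- correctness of the recurrence for `F(S)` and `C(S) = inf F(S)`
used in the FPT-FPTAS for egalitarian welfare (Theorem 5).  For `|S| ≥ 2`,
`F(S) ≠ ∅` iff some `i ∈ S` has `F(S∖{i}) ≠ ∅` and `v_i((C(S∖{i}),1)) ≥ B`,
in which case `C(S)` is the minimum, over all such `i`, of the least point
`b ∈ [C(S∖{i}),1]` with `v_i((C(S∖{i}),b)) ≥ B`; and the analogous
characterization holds for singletons. -/
theorem stmt_7 (n : ℕ) (v : Fin n → Measure ℝ)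
    (hatomless : ∀ i, NoAtoms (v i))
    (hprob : ∀ i, v i (Icc 0 1) = 1) (hsupp : ∀ i, v i (Icc (0 : ℝ) 1)ᶜ = 0)
    (B : ℝ) (hB0 : 0 < B) (hB1 : B ≤ 1) :
    (∀ S : Finset (Fin n), 2 ≤ S.card →
      ((Feas n v B S).Nonempty ↔
        ∃ i ∈ S, (Feas n v B (S.erase i)).Nonempty ∧
          ENNReal.ofReal B ≤ v i (Ioo (sInf (Feas n v B (S.erase i))) 1)) ∧
      ((Feas n v B S).Nonempty →
        IsLeast {b : ℝ | ∃ i ∈ S, (Feas n v B (S.erase i)).Nonempty ∧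
            ENNReal.ofReal B ≤ v i (Ioo (sInf (Feas n v B (S.erase i))) 1) ∧
            IsLeast {b' : ℝ | b' ∈ Icc (sInf (Feas n v B (S.erase i))) 1 ∧
                ENNReal.ofReal B ≤ v i (Ioo (sInf (Feas n v B (S.erase i))) b')} b}
          (sInf (Feas n v B S)))) ∧
    (∀ i : Fin n,
      ((Feas n v B {i}).Nonempty ↔ ENNReal.ofReal B ≤ v i (Ioo (0 : ℝ) 1)) ∧
      ((Feas n v B {i}).Nonempty →
        IsLeast {b : ℝ | b ∈ Icc (0 : ℝ) 1 ∧ ENNReal.ofReal B ≤ v i (Ioo (0 : ℝ) b)}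
          (sInf (Feas n v B {i})))) := by
  have hfin : ∀ i, v i univ ≠ ⊤ := by
    intro i
    have h := measure_union_le (μ := v i) (Icc (0:ℝ) 1) (Icc (0:ℝ) 1)ᶜ
    rw [union_compl_self, hprob, hsupp, add_zero] at h
    exact ne_top_of_le_ne_top ENNReal.one_ne_top h
  have hL := feas_least v B hatomless hfin
  constructor
  · intro S hS2
    have hSne : S.Nonempty := Finset.card_pos.mp (by omega)
    have hchar := feas_char v B S hSne (fun i hi hnei => (hL _ hnei).1)
    constructor
    · constructor
      · rintro ⟨b, hb⟩
        rw [hchar] at hb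
        obtain ⟨i, hi, hnei, ⟨hCb, hb1⟩, hB⟩ := hb
        exact ⟨i, hi, hnei, hB.trans (measure_mono (Ioo_subset_Ioo le_rfl hb1))⟩
      · rintro ⟨i, hi, hnei, hB⟩
        have hC1 : sInf (Feas n v B (S.erase i)) ≤ 1 := ((hL _ hnei).1).1.2
        refine ⟨1, ?_⟩
        rw [hchar]
        exact ⟨i, hi, hnei, ⟨hC1, le_rfl⟩, hB⟩
    · intro hne
      have hlst := hL S hne
      set c := sInf (Feas n v B S) with hcdef
      have hcF : c ∈ Feas n v B S := hlst.1
      constructor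
      · -- membership
        have hc' := hcF
        rw [hchar] at hc'
        obtain ⟨i, hi, hnei, ⟨hCc, hc1⟩, hB⟩ := hc'
        have hB1' : ENNReal.ofReal B ≤ v i (Ioo (sInf (Feas n v B (S.erase i))) 1) :=
          hB.trans (measure_mono (Ioo_subset_Ioo le_rfl hc1))
        haveI : NullSingletonClass (v i) := hatomless i
        have hTne : {b | b ∈ Icc (sInf (Feas n v B (S.erase i))) 1 ∧
            ENNReal.ofReal B ≤ v i (Ioo (sInf (Feas n v B (S.erase i))) b)}.Nonempty :=
          ⟨c, ⟨hCc, hc1⟩, hB⟩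
        have hTleast := leastT (v i) (hfin i) B (sInf (Feas n v B (S.erase i))) hTne
        have h1 : sInf {b | b ∈ Icc (sInf (Feas n v B (S.erase i))) 1 ∧
            ENNReal.ofReal B ≤ v i (Ioo (sInf (Feas n v B (S.erase i))) b)}
            ≤ c := hTleast.2 ⟨⟨hCc, hc1⟩, hB⟩
        have h2 : c ≤ sInf {b | b ∈ Icc (sInf (Feas n v B (S.erase i))) 1 ∧
            ENNReal.ofReal B ≤ v i (Ioo (sInf (Feas n v B (S.erase i))) b)} := by
          apply hlst.2
          rw [hchar]
          exact ⟨i, hi, hnei, hTleast.1.1, hTleast.1.2⟩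
        have heq := le_antisymm h1 h2
        exact ⟨i, hi, hnei, hB1', heq ▸ hTleast⟩
      · -- lower bound
        rintro x ⟨i, hi, hnei, hB1', hxleast⟩
        apply hlst.2
        rw [hchar]
        exact ⟨i, hi, hnei, hxleast.1.1, hxleast.1.2⟩
  · intro i
    have hsingle : Feas n v B {i}
        = {b | b ∈ Icc (0:ℝ) 1 ∧ ENNReal.ofReal B ≤ v i (Ioo (0:ℝ) b)} := by
      have he : ({i} : Finset (Fin n)).erase i = ∅ := Finset.erase_singleton i
      have h := feas_char v B {i} (Finset.singleton_nonempty i) (fun j hj hnej => by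
        rw [Finset.mem_singleton] at hj
        subst hj
        rw [he, feas_empty, csInf_singleton]
        rfl)
      rw [h]
      ext b
      constructor
      · rintro ⟨j, hj, _, hIcc, hB⟩
        rw [Finset.mem_singleton] at hj
        subst hj
        rw [he, feas_empty, csInf_singleton] at hIcc hB
        exact ⟨hIcc, hB⟩
      · rintro ⟨hIcc, hB⟩
        refine ⟨i, Finset.mem_singleton_self i, ?_, ?_, ?_⟩ <;>
          rw [he, feas_empty]
        · exact ⟨0, rfl⟩
        · rwa [csInf_singleton]
        · rwa [csInf_singleton]
    constructor
    · constructor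
      · rintro ⟨b, hb⟩
        rw [hsingle] at hb
        exact hb.2.trans (measure_mono (Ioo_subset_Ioo le_rfl hb.1.2))
      · intro hB
        exact ⟨1, by rw [hsingle]; exact ⟨⟨zero_le_one, le_rfl⟩, hB⟩⟩
    · intro hne
      haveI : NullSingletonClass (v i) := hatomless i
      rw [hsingle] at hne ⊢
      exact leastT (v i) (hfin i) B 0 hne
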